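/- Let L ⊆ Q be a dense extension of Lie algebras, where Q is a multiplicatively semiprime algebra of quotients of L. Then for every essential ideal I of L, the extension I ⊆ Q is dense. -/
import Mathlib


section
variable (Φ : Type*) [CommRing Φ] (Q : Type*) [LieRing Q] [LieAlgebra Φ Q]

/-- The multiplication algebra `M(Q)`. -/
def MQ : Subalgebra Φ (Module.End Φ Q) :=
  Algebra.adjoin Φ (Set.range (LieAlgebra.ad Φ Q))

/-- Density of `S` in `Q`. -/
def IsDenseExtension (S : Set Q) : Prop :=
  ∀ μ ∈ MQ Φ Q, (∀ x ∈ S, μ x = 0) → μ = 0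

/-- `I` is an ideal of the subalgebra with carrier `S`. -/
def IsIdealOf (S : Set Q) (I : Submodule Φ Q) : Prop :=
  (I : Set Q) ⊆ S ∧ ∀ x ∈ S, ∀ y ∈ I, ⁅x, y⁆ ∈ I

/-- The annihilator of `I` in `S` is zero. -/
def AnnZero (S : Set Q) (I : Submodule Φ Q) : Prop :=
  ∀ a ∈ S, (∀ y ∈ I, ⁅a, y⁆ = (0 : Q)) → a = 0

/-- `Q` is an algebra of quotients of the subalgebra with carrier `S`. -/
def IsAlgebraOfQuotients (S : Set Q) : Prop :=
  ∀ q : Q, q ≠ 0 → ∃ I : Submodule Φ Q, IsIdealOf Φ Q S I ∧ AnnZero Φ Q S I ∧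
    (∃ y ∈ I, ⁅y, q⁆ ≠ 0) ∧ ∀ y ∈ I, ⁅y, q⁆ ∈ S

/-- `I` is an essential ideal of the subalgebra with carrier `S`. -/
def IsEssentialIdealOf (S : Set Q) (I : Submodule Φ Q) : Prop :=
  IsIdealOf Φ Q S I ∧
    ∀ J : Submodule Φ Q, IsIdealOf Φ Q S J → J ≠ ⊥ → ∃ x ∈ I, x ∈ J ∧ x ≠ 0

/-- Semiprimeness of an associative subalgebra of `End(Q)`. -/
def AssocSemiprimeOn (S : Set (Module.End Φ Q)) : Prop :=
  ∀ J : Submodule Φ (Module.End Φ Q),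
    ((J : Set (Module.End Φ Q)) ⊆ S ∧ ∀ a ∈ S, ∀ x ∈ J, a * x ∈ J ∧ x * a ∈ J) →
    (∀ x ∈ J, ∀ y ∈ J, x * y = 0) → J = ⊥

/-- `Q` is multiplicatively semiprime. -/
def MultSemiprime : Prop :=
  (∀ I : LieIdeal Φ Q, ⁅I, I⁆ = ⊥ → I = ⊥) ∧
    AssocSemiprimeOn Φ Q (MQ Φ Q : Set (Module.End Φ Q))

end

section Aux

variable {Φ : Type*} [CommRing Φ] {Q : Type*} [LieRing Q] [LieAlgebra Φ Q]

/-- The Lie ideal of `Q` generated by `I` (as a submodule): the span of `M(Q)·I`. -/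
def NN (I : Submodule Φ Q) : Submodule Φ Q :=
  Submodule.span Φ {q : Q | ∃ ρ ∈ MQ Φ Q, ∃ x ∈ I, ρ x = q}

lemma ad_mem_MQ (q : Q) : (LieAlgebra.ad Φ Q q : Module.End Φ Q) ∈ MQ Φ Q :=
  Algebra.subset_adjoin ⟨q, rfl⟩

lemma mem_NN_of_mem {I : Submodule Φ Q} {x : Q} (hx : x ∈ I) : x ∈ NN I :=
  Submodule.subset_span ⟨1, one_mem _, x, hx, rfl⟩

lemma NN_mapsTo {I : Submodule Φ Q} {a : Module.End Φ Q} (ha : a ∈ MQ Φ Q)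
    {n : Q} (hn : n ∈ NN I) : a n ∈ NN I := by
  induction hn using Submodule.span_induction with
  | mem n hn =>
    obtain ⟨ρ, hρ, x, hx, rfl⟩ := hn
    exact Submodule.subset_span ⟨a * ρ, mul_mem ha hρ, x, hx, rfl⟩
  | zero => simp
  | add x y hx hy ihx ihy => simpa [map_add] using (NN I).add_mem ihx ihy
  | smul c x hx ihx => simpa [map_smul] using (NN I).smul_mem c ihx

lemma NN_lie {I : Submodule Φ Q} (q : Q) {n : Q} (hn : n ∈ NN I) : ⁅q, n⁆ ∈ NN I := by
  have : (LieAlgebra.ad Φ Q q) n ∈ NN I := NN_mapsTo (ad_mem_MQ q) hn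
  simpa using this

/-- Lemma 1: if `ν ∈ M(Q)` kills the ideal `I` of `L` and `L` is dense,
then `ν ∘ ad x = 0` for every `x ∈ I`. -/
lemma kill_ad {L : LieSubalgebra Φ Q} (hdense : IsDenseExtension Φ Q (L : Set Q))
    {I : Submodule Φ Q} (hIbr : ∀ x ∈ (L : Set Q), ∀ y ∈ I, ⁅x, y⁆ ∈ I)
    {ν : Module.End Φ Q} (hν : ν ∈ MQ Φ Q) (hνI : ∀ x ∈ I, ν x = 0)
    {x : Q} (hx : x ∈ I) (q : Q) : ν ⁅x, q⁆ = 0 := by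
  have h0 : ν * (LieAlgebra.ad Φ Q x : Module.End Φ Q) = 0 := by
    apply hdense _ (mul_mem hν (ad_mem_MQ x))
    intro a ha
    have h1 : ν ⁅a, x⁆ = 0 := hνI _ (hIbr a ha x hx)
    have h2 : (ν * (LieAlgebra.ad Φ Q x : Module.End Φ Q)) a = ν ⁅x, a⁆ := rfl
    rw [h2, ← lie_skew, map_neg, h1, neg_zero]
  have := LinearMap.ext_iff.mp h0 q
  simpa using this

/-- Lemma 2: the annihilator of `I` in `M(Q)` is a right ideal. -/
lemma kill_MQ_I {L : LieSubalgebra Φ Q} (hdense : IsDenseExtension Φ Q (L : Set Q))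
    {I : Submodule Φ Q} (hIbr : ∀ x ∈ (L : Set Q), ∀ y ∈ I, ⁅x, y⁆ ∈ I)
    {ρ : Module.End Φ Q} (hρ : ρ ∈ MQ Φ Q) :
    ∀ ν ∈ MQ Φ Q, (∀ x ∈ I, ν x = 0) → ∀ x ∈ I, ν (ρ x) = 0 := by
  have hρ' : ρ ∈ Algebra.adjoin Φ (Set.range (LieAlgebra.ad Φ Q)) := hρ
  clear hρ
  induction hρ' using Algebra.adjoin_induction with
  | mem ρ hρm =>
    obtain ⟨q', rfl⟩ := hρm
    intro ν hν hνI x hx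
    have : (LieAlgebra.ad Φ Q q' : Module.End Φ Q) x = ⁅q', x⁆ := rfl
    rw [this, ← lie_skew, map_neg, kill_ad hdense hIbr hν hνI hx q', neg_zero]
  | algebraMap r =>
    intro ν hν hνI x hx
    have : (algebraMap Φ (Module.End Φ Q) r) x = r • x := by
      simp [Module.algebraMap_end_apply]
    rw [this, map_smul, hνI x hx, smul_zero]
  | add ρ₁ ρ₂ h₁ h₂ ih₁ ih₂ =>
    intro ν hν hνI x hx
    have e : (ρ₁ + ρ₂) x = ρ₁ x + ρ₂ x := rfl
    rw [e, map_add, ih₁ ν hν hνI x hx, ih₂ ν hν hνI x hx, add_zero]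
  | mul ρ₁ ρ₂ h₁ h₂ ih₁ ih₂ =>
    intro ν hν hνI x hx
    have hν' : ν * ρ₁ ∈ MQ Φ Q := mul_mem hν h₁
    have hν'I : ∀ x ∈ I, (ν * ρ₁) x = 0 := fun x hx => ih₁ ν hν hνI x hx
    have := ih₂ (ν * ρ₁) hν' hν'I x hx
    simpa [Module.End.mul_apply] using this

/-- If `ν ∈ M(Q)` kills `I`, it kills all of `NN I`. -/
lemma kill_NN {L : LieSubalgebra Φ Q} (hdense : IsDenseExtension Φ Q (L : Set Q))
    {I : Submodule Φ Q} (hIbr : ∀ x ∈ (L : Set Q), ∀ y ∈ I, ⁅x, y⁆ ∈ I)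
    {ν : Module.End Φ Q} (hν : ν ∈ MQ Φ Q) (hνI : ∀ x ∈ I, ν x = 0)
    {n : Q} (hn : n ∈ NN I) : ν n = 0 := by
  induction hn using Submodule.span_induction with
  | mem n hn =>
    obtain ⟨ρ, hρ, x, hx, rfl⟩ := hn
    exact kill_MQ_I hdense hIbr hρ ν hν hνI x hx
  | zero => simp
  | add x y hx hy ihx ihy => rw [map_add, ihx, ihy, add_zero]
  | smul c x hx ihx => rw [map_smul, ihx, smul_zero]

end Aux

/-- Let `L ⊆ Q` be a dense extension of Lie algebras with `Q` a
multiplicatively semiprime algebra of quotients of `L`.  Then `I ⊆ Q` is a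
dense extension for every essential ideal `I` of `L`. -/
theorem stmt16 {Φ : Type*} [CommRing Φ] {Q : Type*} [LieRing Q] [LieAlgebra Φ Q]
    (L : LieSubalgebra Φ Q)
    (hdense : IsDenseExtension Φ Q (L : Set Q))
    (hmsp : MultSemiprime Φ Q)
    (hquo : IsAlgebraOfQuotients Φ Q (L : Set Q)) :
    ∀ I : Submodule Φ Q, IsEssentialIdealOf Φ Q (L : Set Q) I →
      IsDenseExtension Φ Q (I : Set Q) := by
  intro I hI
  obtain ⟨⟨hIL, hIbr⟩, hess⟩ := hI
  intro μ hμ hμI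
  have hμI' : ∀ x ∈ I, μ x = 0 := fun x hx => hμI x hx
  -- The Lie ideal `Z = NN I ∩ Ann(NN I)` of `Q` is zero by Lie-semiprimeness.
  have hZ : ∀ w : Q, w ∈ NN I → (∀ n ∈ NN I, ⁅w, n⁆ = 0) → w = 0 := by
    intro w hw1 hw2
    let Z : LieIdeal Φ Q :=
      { carrier := {q : Q | q ∈ NN I ∧ ∀ n ∈ NN I, ⁅q, n⁆ = 0}
        add_mem' := fun ha hb =>
          ⟨(NN I).add_mem ha.1 hb.1, fun n hn => by
            rw [add_lie, ha.2 n hn, hb.2 n hn, add_zero]⟩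
        zero_mem' := ⟨(NN I).zero_mem, fun n _ => zero_lie n⟩
        smul_mem' := fun c x hx =>
          ⟨(NN I).smul_mem c hx.1, fun n hn => by rw [smul_lie, hx.2 n hn, smul_zero]⟩
        lie_mem := fun {x m} hm =>
          ⟨NN_lie x hm.1, fun n hn => by
            rw [lie_lie, hm.2 n hn, hm.2 _ (NN_lie x hn), lie_zero, sub_zero]⟩ }
    have hZbot : Z = ⊥ := by
      apply hmsp.1 Z
      rw [LieSubmodule.lie_eq_bot_iff]
      intro x hx m hm
      exact hx.2 m hm.1
    have hwZ : w ∈ Z := ⟨hw1, hw2⟩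
    rw [hZbot] at hwZ
    simpa using hwZ
  -- The annihilator of `I` in `L` is zero (uses essentiality).
  have lem3 : ∀ w ∈ (L : Set Q), (∀ x ∈ I, ⁅w, x⁆ = 0) → w = 0 := by
    intro w hw hwI
    by_contra hw0
    let A : Submodule Φ Q :=
      { carrier := {a : Q | a ∈ L ∧ ∀ x ∈ I, ⁅a, x⁆ = 0}
        add_mem' := fun ha hb =>
          ⟨L.add_mem ha.1 hb.1, fun x hx => by rw [add_lie, ha.2 x hx, hb.2 x hx, add_zero]⟩
        zero_mem' := ⟨L.zero_mem, fun x _ => zero_lie x⟩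
        smul_mem' := fun c a ha =>
          ⟨L.smul_mem c ha.1, fun x hx => by rw [smul_lie, ha.2 x hx, smul_zero]⟩ }
    have hAideal : IsIdealOf Φ Q (L : Set Q) A := by
      constructor
      · intro a ha; exact ha.1
      · intro b hb a ha
        refine ⟨L.lie_mem hb ha.1, fun x hx => ?_⟩
        rw [lie_lie, ha.2 x hx, ha.2 _ (hIbr b hb x hx), lie_zero, sub_zero]
    have hAne : A ≠ ⊥ := by
      intro h
      have hwA : w ∈ A := ⟨hw, hwI⟩
      rw [h] at hwA
      exact hw0 (by simpa using hwA)
    obtain ⟨w', hw'I, hw'A, hw'0⟩ := hess A hAideal hAne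
    have hkill : ∀ x ∈ I, (LieAlgebra.ad Φ Q w' : Module.End Φ Q) x = 0 :=
      fun x hx => hw'A.2 x hx
    have hN : ∀ n ∈ NN I, ⁅w', n⁆ = 0 := by
      intro n hn
      have := kill_NN hdense hIbr (ad_mem_MQ w') hkill hn
      simpa using this
    exact hw'0 (hZ w' (mem_NN_of_mem hw'I) hN)
  -- Any element of `M(Q)` killing `NN I` with range inside `NN I` is zero
  -- (uses associative semiprimeness).
  have hJbot : ∀ ν : Module.End Φ Q, ν ∈ MQ Φ Q → (∀ n ∈ NN I, ν n = 0) →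
      (∀ q : Q, ν q ∈ NN I) → ν = 0 := by
    intro ν hν hνN hνr
    let Jm : Submodule Φ (Module.End Φ Q) :=
      { carrier := {τ : Module.End Φ Q |
          τ ∈ MQ Φ Q ∧ (∀ n ∈ NN I, τ n = 0) ∧ ∀ q : Q, τ q ∈ NN I}
        add_mem' := fun ha hb =>
          ⟨add_mem ha.1 hb.1,
           fun n hn => by
             rw [LinearMap.add_apply, ha.2.1 n hn, hb.2.1 n hn, add_zero],
           fun q => by
             rw [LinearMap.add_apply]; exact (NN I).add_mem (ha.2.2 q) (hb.2.2 q)⟩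
        zero_mem' := ⟨zero_mem _, fun n _ => rfl, fun q => (NN I).zero_mem⟩
        smul_mem' := fun c τ hτ =>
          ⟨Subalgebra.smul_mem _ hτ.1 c,
           fun n hn => by rw [LinearMap.smul_apply, hτ.2.1 n hn, smul_zero],
           fun q => by rw [LinearMap.smul_apply]; exact (NN I).smul_mem c (hτ.2.2 q)⟩ }
    have hbot : Jm = ⊥ := by
      apply hmsp.2 Jm
      · constructor
        · intro τ hτ; exact hτ.1
        · intro a ha τ hτ
          constructor
          · refine ⟨mul_mem ha hτ.1, fun n hn => ?_, fun q => ?_⟩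
            · rw [Module.End.mul_apply, hτ.2.1 n hn, map_zero]
            · exact NN_mapsTo ha (hτ.2.2 q)
          · refine ⟨mul_mem hτ.1 ha, fun n hn => ?_, fun q => ?_⟩
            · rw [Module.End.mul_apply, hτ.2.1 _ (NN_mapsTo ha hn)]
            · exact hτ.2.2 _
      · intro x hx y hy
        apply LinearMap.ext
        intro q
        rw [Module.End.mul_apply, hx.2.1 _ (hy.2.2 q), LinearMap.zero_apply]
    have hνJ : ν ∈ Jm := ⟨hν, hνN, hνr⟩
    rw [hbot] at hνJ
    simpa using hνJ
  -- `μ(Q)` annihilates `NN I`.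
  have hAnnN : ∀ n ∈ NN I, ∀ q : Q, ⁅n, μ q⁆ = 0 := by
    intro n hn q
    have h1 : (LieAlgebra.ad Φ Q n : Module.End Φ Q) * μ ∈ MQ Φ Q :=
      mul_mem (ad_mem_MQ n) hμ
    have h2 : ∀ n' ∈ NN I, ((LieAlgebra.ad Φ Q n : Module.End Φ Q) * μ) n' = 0 := by
      intro n' hn'
      have hμn' : μ n' = 0 := kill_NN hdense hIbr hμ hμI' hn'
      show (LieAlgebra.ad Φ Q n) (μ n') = 0
      rw [hμn', map_zero]
    have h3 : ∀ q' : Q, ((LieAlgebra.ad Φ Q n : Module.End Φ Q) * μ) q' ∈ NN I := by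
      intro q'
      show ⁅n, μ q'⁆ ∈ NN I
      have hmem : ⁅μ q', n⁆ ∈ NN I := NN_lie (μ q') hn
      have : ⁅n, μ q'⁆ = -⁅μ q', n⁆ := (lie_skew n (μ q')).symm
      rw [this]
      exact (NN I).neg_mem hmem
    have h0 := hJbot _ h1 h2 h3
    have := LinearMap.ext_iff.mp h0 q
    simpa using this
  -- Conclude: `μ` vanishes on `L`, hence `μ = 0` by density of `L`.
  apply hdense μ hμ
  intro a ha
  by_contra hqa
  obtain ⟨J', ⟨hJ'L, hJ'br⟩, _, ⟨y, hyJ', hyq⟩, hJ'q⟩ := hquo (μ a) hqa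
  have hzL : ⁅y, μ a⁆ ∈ (L : Set Q) := hJ'q y hyJ'
  have hz : ∀ x ∈ I, ⁅⁅y, μ a⁆, x⁆ = 0 := by
    intro x hx
    have h1 : ⁅μ a, x⁆ = 0 := by
      have := hAnnN x (mem_NN_of_mem hx) a
      rw [← lie_skew, this, neg_zero]
    have h2 : ⁅μ a, ⁅y, x⁆⁆ = 0 := by
      have hyx : ⁅y, x⁆ ∈ I := hIbr y (hJ'L hyJ') x hx
      have := hAnnN _ (mem_NN_of_mem hyx) a
      rw [← lie_skew, this, neg_zero]
    rw [lie_lie, h1, h2, lie_zero, sub_zero]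
  exact hyq (lem3 _ hzL hz)
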